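/- Let k be a commutative ring, R a commutative k-algebra, and R' a commutative R-algebra which is formally étale over R. Let R'' = R' ⊗_R R' and let p₁, p₂ : R' → R'' be the two canonical R-algebra maps p₁(s) = s ⊗ 1 and p₂(s) = 1 ⊗ s. Let d : R → R be a k-derivation and d' : R' → R' its unique k-derivation extension along R → R'. Then there exists a unique k-derivation d'' : R'' → R'' satisfying both d'' ∘ p₁ = p₁ ∘ d' and d'' ∘ p₂ = p₂ ∘ d'. -/
import Mathlib

open TensorProduct

section Aux

variable (k : Type*) [CommRing k] (R : Type*) [CommRing R] [Algebra k R]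
  (R' : Type*) [CommRing R'] [Algebra R R'] [Algebra k R'] [IsScalarTower k R R']
  (d : Derivation k R R) (d' : Derivation k R' R')

noncomputable def dAddHom (hd' : ∀ r : R, d' (algebraMap R R' r) = algebraMap R R' (d r)) :
    R' ⊗[R] R' →+ R' ⊗[R] R' :=
  TensorProduct.liftAddHom
    { toFun := fun a =>
        { toFun := fun b => d' a ⊗ₜ[R] b + a ⊗ₜ[R] d' b
          map_zero' := by simp
          map_add' := by intro b c; simp only [map_add, tmul_add]; abel }
      map_zero' := by ext b; simp
      map_add' := by intro a c; ext b; simp only [map_add, add_tmul,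
        AddMonoidHom.coe_mk, ZeroHom.coe_mk, AddMonoidHom.add_apply]; abel }
    (fun r a b => by
      have hc : ∀ x : R', d' (r • x) = r • d' x + x * algebraMap R R' (d r) := by
        intro x
        have h0 : r • x = algebraMap R R' r * x := Algebra.smul_def r x
        rw [h0, Derivation.leibniz, hd', smul_eq_mul, smul_eq_mul, ← Algebra.smul_def]
      simp only [AddMonoidHom.coe_mk, ZeroHom.coe_mk, hc]
      rw [add_tmul, tmul_add, smul_tmul, smul_tmul]
      have h1 : (a * algebraMap R R' (d r)) ⊗ₜ[R] b = a ⊗ₜ[R] (b * algebraMap R R' (d r)) := by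
        rw [mul_comm a, ← Algebra.smul_def, smul_tmul, Algebra.smul_def, mul_comm]
      rw [h1]
      abel)

variable (hd' : ∀ r : R, d' (algebraMap R R' r) = algebraMap R R' (d r))

@[simp] lemma dAddHom_tmul (a b : R') :
    dAddHom k R R' d d' hd' (a ⊗ₜ[R] b) = d' a ⊗ₜ[R] b + a ⊗ₜ[R] d' b := rfl

lemma dAddHom_smul (c : k) (x : R' ⊗[R] R') :
    dAddHom k R R' d d' hd' (c • x) = c • dAddHom k R R' d d' hd' x := by
  induction x using TensorProduct.induction_on with
  | zero => simp
  | tmul a b =>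
      rw [smul_tmul']
      simp only [dAddHom_tmul, Derivation.map_smul, smul_tmul', smul_add]
  | add x y hx hy => simp only [smul_add, map_add, hx, hy]

lemma dAddHom_mul (x y : R' ⊗[R] R') :
    dAddHom k R R' d d' hd' (x * y) =
      x * dAddHom k R R' d d' hd' y + y * dAddHom k R R' d d' hd' x := by
  induction x using TensorProduct.induction_on with
  | zero => simp
  | tmul a b =>
      induction y using TensorProduct.induction_on with
      | zero => simp
      | tmul a' b' =>
          simp only [Algebra.TensorProduct.tmul_mul_tmul, dAddHom_tmul, Derivation.leibniz,
            smul_eq_mul, add_tmul, tmul_add, mul_add, Algebra.TensorProduct.tmul_mul_tmul]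
          rw [mul_comm b' b, mul_comm a' a]
          abel
      | add y1 y2 h1 h2 =>
          simp only [mul_add, add_mul, map_add, h1, h2]
          abel
  | add x1 x2 h1 h2 =>
      simp only [add_mul, mul_add, map_add, h1, h2]
      abel

noncomputable def dDeriv : Derivation k (R' ⊗[R] R') (R' ⊗[R] R') :=
  Derivation.mk'
    { toFun := dAddHom k R R' d d' hd'
      map_add' := map_add _
      map_smul' := fun c x => dAddHom_smul k R R' d d' hd' c x }
    (fun x y => by
      have := dAddHom_mul k R R' d d' hd' x y
      simpa [smul_eq_mul] using this)

@[simp] lemma dDeriv_tmul (a b : R') :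
    dDeriv k R R' d d' hd' (a ⊗ₜ[R] b) = d' a ⊗ₜ[R] b + a ⊗ₜ[R] d' b := rfl

end Aux

/-- Let `k` be a commutative ring, `R` a commutative `k`-algebra and
`R'` a formally étale commutative `R`-algebra.  Let `R'' = R' ⊗[R] R'` with the two
canonical maps `p₁(s) = s ⊗ 1` and `p₂(s) = 1 ⊗ s`.  If `d` is a `k`-derivation of `R`
and `d'` is its unique extension to a `k`-derivation of `R'`, then there exists a
unique `k`-derivation `d''` of `R''` satisfying `d'' ∘ p₁ = p₁ ∘ d'` and
`d'' ∘ p₂ = p₂ ∘ d'`. -/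
theorem derivation_extends_uniquely_to_tensor_square.{u}
    (k : Type*) [CommRing k] (R : Type u) [CommRing R] [Algebra k R]
    (R' : Type u) [CommRing R'] [Algebra R R'] [Algebra k R'] [IsScalarTower k R R']
    [Algebra.FormallyEtale R R']
    (d : Derivation k R R) (d' : Derivation k R' R')
    (hd' : ∀ r : R, d' (algebraMap R R' r) = algebraMap R R' (d r)) :
    ∃! d'' : Derivation k (R' ⊗[R] R') (R' ⊗[R] R'),
      (∀ s : R', d'' (s ⊗ₜ[R] (1 : R')) = (d' s) ⊗ₜ[R] (1 : R')) ∧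
      (∀ s : R', d'' ((1 : R') ⊗ₜ[R] s) = (1 : R') ⊗ₜ[R] (d' s)) := by
  refine ⟨dDeriv k R R' d d' hd', ⟨?_, ?_⟩, ?_⟩
  · intro s; simp
  · intro s; simp
  · intro D ⟨h1, h2⟩
    ext x
    induction x using TensorProduct.induction_on with
    | zero => simp
    | tmul a b =>
        have hab : a ⊗ₜ[R] b = (a ⊗ₜ[R] (1:R')) * ((1:R') ⊗ₜ[R] b) := by
          rw [Algebra.TensorProduct.tmul_mul_tmul, mul_one, one_mul]
        rw [hab, Derivation.leibniz, Derivation.leibniz, h1, h2, dDeriv_tmul, dDeriv_tmul]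
        simp only [smul_eq_mul, Algebra.TensorProduct.tmul_mul_tmul, mul_one, one_mul,
          Derivation.map_one_eq_zero, tmul_zero, zero_tmul, add_zero, zero_add]
    | add x y hx hy => simp only [map_add, hx, hy]
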